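/- Let X follow a hypergeometric distribution with population size m+n', κ success states, and m draws (κ a non-negative integer with κ ≤ m+n'). Then E[X/(1+κ−X)] ≤ m/(1+n'). -/

import Mathlib

/-- For X ~ Hypergeom(m+n', κ, m), E[X/(1+κ−X)] ≤ m/(1+n'). -/
theorem hypergeom_ratio_expectation_le
    (m n' κ : ℕ) (hm : 0 < m) (hn : 0 < n') (hκ : κ ≤ m + n') :
    ∑ x ∈ Finset.range (min m κ + 1),
        ((x : ℝ) / (1 + (κ : ℝ) - (x : ℝ))) *
          (((Nat.choose κ x : ℝ) * (Nat.choose (m + n' - κ) (m - x) : ℝ)) /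
            (Nat.choose (m + n') m : ℝ))
      ≤ (m : ℝ) / (1 + (n' : ℝ)) := by
  have hmN : m ≤ m + n' := Nat.le_add_right _ _
  have hCN : (0:ℝ) < (Nat.choose (m+n') m : ℝ) := by
    exact_mod_cast Nat.choose_pos hmN
  -- termwise rewrite
  have key : ∀ x ∈ Finset.range (min m κ + 1),
      ((x : ℝ) / (1 + (κ : ℝ) - (x : ℝ))) *
          (((Nat.choose κ x : ℝ) * (Nat.choose (m + n' - κ) (m - x) : ℝ)) /
            (Nat.choose (m + n') m : ℝ))
      = (if x = 0 then 0 else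
          (Nat.choose κ (x-1) : ℝ) * (Nat.choose (m + n' - κ) (m - x) : ℝ) /
            (Nat.choose (m + n') m : ℝ)) := by
    intro x hx
    simp only [Finset.mem_range] at hx
    have hxκ : x ≤ κ := le_trans (Nat.lt_succ_iff.mp hx) (min_le_right _ _)
    rcases Nat.eq_zero_or_pos x with h0 | hpos
    · simp [h0]
    · obtain ⟨y, rfl⟩ := Nat.exists_eq_add_of_lt hpos
      simp only [Nat.zero_add] at *
      have hyκ : y < κ := hxκ
      rw [if_neg (Nat.succ_ne_zero y)]
      have hcast : (1 + (κ : ℝ) - ((y+1 : ℕ) : ℝ)) = ((κ - y : ℕ) : ℝ) := by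
        push_cast [Nat.cast_sub hyκ.le]
        ring
      have hne : ((κ - y : ℕ) : ℝ) ≠ 0 := by
        have : 0 < κ - y := Nat.sub_pos_of_lt hyκ
        exact_mod_cast this.ne'
      have hchoose : (Nat.choose κ (y+1) : ℝ) * ((y+1 : ℕ) : ℝ)
          = (Nat.choose κ y : ℝ) * ((κ - y : ℕ) : ℝ) := by
        exact_mod_cast congrArg (Nat.cast (R := ℝ)) (Nat.choose_succ_right_eq κ y)
      rw [hcast]
      simp only [Nat.add_sub_cancel]
      field_simp
      push_cast at hchoose ⊢
      linear_combination (((m + n' - κ).choose (m - (y+1)) : ℝ)) * hchoose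
  rw [Finset.sum_congr rfl key]
  -- shift index
  rw [Finset.sum_range_succ']
  simp only [Nat.succ_ne_zero, if_false, if_true, ite_true, ite_false, reduceIte, add_zero,
    Nat.add_sub_cancel]
  -- bound by full sum over range m
  have hsub : Finset.range (min m κ) ⊆ Finset.range m :=
    Finset.range_subset_range.mpr (min_le_left _ _)
  have hle : ∑ i ∈ Finset.range (min m κ),
      (Nat.choose κ i : ℝ) * (Nat.choose (m + n' - κ) (m - (i+1)) : ℝ) /
        (Nat.choose (m + n') m : ℝ)
      ≤ ∑ i ∈ Finset.range m,
      (Nat.choose κ i : ℝ) * (Nat.choose (m + n' - κ) (m - (i+1)) : ℝ) /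
        (Nat.choose (m + n') m : ℝ) := by
    apply Finset.sum_le_sum_of_subset_of_nonneg hsub
    intro i _ _
    positivity
  refine le_trans hle ?_
  -- Vandermonde
  have hvan : ∑ i ∈ Finset.range m,
      Nat.choose κ i * Nat.choose (m + n' - κ) (m - (i+1))
      = Nat.choose (m + n') (m - 1) := by
    have hNκ : κ + (m + n' - κ) = m + n' := Nat.add_sub_cancel' hκ
    conv_rhs => rw [← hNκ]
    rw [Nat.add_choose_eq, Finset.Nat.sum_antidiagonal_eq_sum_range_succ_mk]
    have hm1 : (m - 1).succ = m := by omega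
    rw [hm1]
    apply Finset.sum_congr rfl
    intro i hi
    have h2 : m - (i+1) = m - 1 - i := by omega
    rw [h2]
  have hsum : ∑ i ∈ Finset.range m,
      (Nat.choose κ i : ℝ) * (Nat.choose (m + n' - κ) (m - (i+1)) : ℝ) /
        (Nat.choose (m + n') m : ℝ)
      = (Nat.choose (m + n') (m - 1) : ℝ) / (Nat.choose (m + n') m : ℝ) := by
    rw [← Finset.sum_div]
    congr 1
    exact_mod_cast congrArg (Nat.cast (R := ℝ)) hvan
  rw [hsum]
  -- final ratio
  have hrat : (Nat.choose (m + n') m : ℝ) * (m : ℝ)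
      = (Nat.choose (m + n') (m - 1) : ℝ) * ((n' : ℝ) + 1) := by
    have h := Nat.choose_succ_right_eq (m + n') (m - 1)
    rw [Nat.sub_add_cancel hm] at h
    have h2 : m + n' - (m - 1) = n' + 1 := by omega
    rw [h2] at h
    exact_mod_cast congrArg (Nat.cast (R := ℝ)) h
  rw [div_le_div_iff₀ hCN (by linarith [hn.le] : (0:ℝ) < 1 + (n' : ℝ))]
  have hn1 : (0:ℝ) < (n' : ℝ) + 1 := by positivity
  nlinarith [hrat]
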